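/- For all natural numbers m, l with l ≤ m, the identity (2m - 2l + 1)!! * ∑_{j=0}^{min(l, m-l)} 4^j * C(m; m-j-l, 2j, l-j) / (2j + 1) = ((2m + 1)!! / (2l + 1)!!) * C(m, l) holds. -/

import Mathlib

open Finset Nat

/-- `tq j = (2j)‼ / (2j+1)‼` as a rational number. -/
noncomputable def tq (j : ℕ) : ℚ := ((2 * j)‼ : ℚ) / ((2 * j + 1)‼ : ℚ)

lemma dfq_ne (n : ℕ) : ((n‼ : ℚ)) ≠ 0 := by
  exact_mod_cast (Nat.doubleFactorial_pos n).ne'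

lemma tq_ne (j : ℕ) : tq j ≠ 0 :=
  div_ne_zero (dfq_ne _) (dfq_ne _)

lemma tq_succ (j : ℕ) : (2 * (j : ℚ) + 5) * tq (j + 2) = (2 * (j : ℚ) + 4) * tq (j + 1) := by
  have a1 : 2 * (j + 2) = 2 * j + 2 + 2 := by omega
  have a2 : 2 * j + 2 + 2 + 1 = 2 * j + 3 + 2 := by omega
  have a3 : 2 * (j + 1) = 2 * j + 2 := by omega
  have a4 : 2 * (j + 1) + 1 = 2 * j + 3 := by omega
  simp only [tq, a1, a2, a3, a4, Nat.doubleFactorial_add_two]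
  have hA := dfq_ne (2 * j + 2)
  have hB := dfq_ne (2 * j + 3)
  push_cast
  field_simp
  ring

lemma choose_cast_rel (n k : ℕ) :
    ((n.choose (k + 1)) : ℚ) * (k + 1) = (n.choose k : ℚ) * ((n : ℚ) - k) := by
  rcases lt_or_ge k n with h | h
  · have h' := congrArg (Nat.cast : ℕ → ℚ) (Nat.choose_succ_right_eq n k)
    push_cast [Nat.cast_sub h.le] at h'
    exact h'
  · rcases Nat.eq_or_lt_of_le h with rfl | h2
    · simp
    · rw [Nat.choose_eq_zero_of_lt h2, Nat.choose_eq_zero_of_lt (by omega)]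
      simp

/-- The telescoping antidifference. -/
noncomputable def rr (a b : ℕ) : ℕ → ℚ
  | 0 => 0
  | (j + 1) => -(2 * (j : ℚ) + 3) * tq (j + 1) * (a.choose j) * (b.choose (j + 1))

lemma tq_zero : tq 0 = 1 := by norm_num [tq, Nat.doubleFactorial]

lemma tq_one : tq 1 = 2 / 3 := by norm_num [tq, Nat.doubleFactorial]

lemma tele (a b j : ℕ) :
    (2 * (a : ℚ) + 3) * (tq j * ((a + 1).choose j) * (b.choose j))
      - (2 * (a : ℚ) + 2 * b + 3) * (tq j * (a.choose j) * (b.choose j))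
    = rr a b (j + 1) - rr a b j := by
  cases j with
  | zero =>
    have h1 : rr a b 0 = 0 := rfl
    have h2 : rr a b 1 = -(2 * ((0 : ℕ) : ℚ) + 3) * tq (0 + 1) * (a.choose 0) * (b.choose (0 + 1)) := rfl
    rw [h1, h2]
    norm_num [tq_zero, tq_one]
  | succ j =>
    have hcs : (((a + 1).choose (j + 1)) : ℚ) = (a.choose j : ℚ) + (a.choose (j + 1) : ℚ) := by
      rw [Nat.choose_succ_succ]
      push_cast
      ring
    have h1 := choose_cast_rel a j
    have h2 := choose_cast_rel b (j + 1)
    have h3 := tq_succ j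
    simp only [rr]
    rw [hcs]
    push_cast at h1 h2 h3 hcs ⊢
    linear_combination ((a.choose (j+1) : ℚ) * (b.choose (j+2) : ℚ)) * h3
      - 2 * tq (j+1) * (b.choose (j+1) : ℚ) * h1
      + 2 * tq (j+1) * (a.choose (j+1) : ℚ) * h2

lemma key (a b : ℕ) :
    ∑ j ∈ Finset.range (a + 1), tq j * (a.choose j : ℚ) * (b.choose j : ℚ)
      = ((2 * a + 2 * b + 1)‼ : ℚ) / (((2 * a + 1)‼ : ℚ) * ((2 * b + 1)‼ : ℚ)) := by
  induction a with
  | zero =>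
    rw [Finset.sum_range_one, tq_zero]
    simp only [Nat.choose_zero_right, Nat.cast_one]
    rw [eq_div_iff (mul_ne_zero (dfq_ne _) (dfq_ne _))]
    norm_num [Nat.doubleFactorial]
  | succ a ih =>
    rw [show a + 1 + 1 = a + 2 from rfl]
    have hsum : ∑ j ∈ Finset.range (a + 2),
        ((2 * (a : ℚ) + 3) * (tq j * ((a + 1).choose j) * (b.choose j))
          - (2 * (a : ℚ) + 2 * b + 3) * (tq j * (a.choose j) * (b.choose j)))
        = rr a b (a + 2) - rr a b 0 := by
      rw [Finset.sum_congr rfl (fun j _ => tele a b j)]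
      exact Finset.sum_range_sub (rr a b) (a + 2)
    have hend : rr a b (a + 2) = 0 := by
      simp [rr, Nat.choose_eq_zero_of_lt (Nat.lt_succ_self a)]
    have h00 : rr a b 0 = 0 := rfl
    rw [hend, h00, Finset.sum_sub_distrib, ← Finset.mul_sum, ← Finset.mul_sum] at hsum
    have hext : ∑ j ∈ Finset.range (a + 2), tq j * (a.choose j : ℚ) * (b.choose j : ℚ)
        = ((2 * a + 2 * b + 1)‼ : ℚ) / (((2 * a + 1)‼ : ℚ) * ((2 * b + 1)‼ : ℚ)) := by
      rw [Finset.sum_range_succ]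
      simp [Nat.choose_eq_zero_of_lt (Nat.lt_succ_self a), ih]
    rw [hext] at hsum
    have hdf1 : ((2 * (a + 1) + 1)‼ : ℚ) = (2 * (a : ℚ) + 3) * ((2 * a + 1)‼ : ℚ) := by
      have h : 2 * (a + 1) + 1 = 2 * a + 1 + 2 := by ring
      rw [h, Nat.doubleFactorial_add_two]
      push_cast
      ring
    have hdf2 : ((2 * (a + 1) + 2 * b + 1)‼ : ℚ)
        = (2 * (a : ℚ) + 2 * b + 3) * ((2 * a + 2 * b + 1)‼ : ℚ) := by
      have h : 2 * (a + 1) + 2 * b + 1 = 2 * a + 2 * b + 1 + 2 := by ring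
      rw [h, Nat.doubleFactorial_add_two]
      push_cast
      ring
    have h3 : (2 * (a : ℚ) + 3) ≠ 0 := by positivity
    have hA := dfq_ne (2 * a + 1)
    have hB := dfq_ne (2 * b + 1)
    rw [hdf1, hdf2, eq_div_iff (mul_ne_zero (mul_ne_zero h3 hA) hB)]
    field_simp at hsum
    linear_combination hsum

lemma term_eq (m l j : ℕ) (hlm : l ≤ m) (hj1 : j ≤ l) (hj2 : j ≤ m - l) :
    ((4 : ℚ) ^ j *
        ((m.factorial : ℚ) /
          (((m - j - l).factorial : ℚ) * ((2 * j).factorial : ℚ) * ((l - j).factorial : ℚ)))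
        / (2 * (j : ℚ) + 1))
      = (m.choose l : ℚ) * (tq j * (l.choose j : ℚ) * ((m - l).choose j : ℚ)) := by
  have hml : m - j - l = m - l - j := by omega
  rw [hml, Nat.cast_choose ℚ hlm, Nat.cast_choose ℚ hj1, Nat.cast_choose ℚ hj2]
  have hfac : ((2 * j).factorial : ℚ)
      = ((2 * j + 1)‼ : ℚ) * (2 ^ j * (j.factorial : ℚ)) / (2 * (j : ℚ) + 1) := by
    have hn : (2 * j).factorial * (2 * j + 1) = (2 * j + 1)‼ * (2 ^ j * j.factorial) := by
      have h1 : (2 * j + 1).factorial = (2 * j + 1) * (2 * j).factorial :=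
        Nat.factorial_succ (2 * j)
      have h2 : (2 * j + 1).factorial = (2 * j + 1)‼ * (2 * j)‼ :=
        Nat.factorial_eq_mul_doubleFactorial (2 * j)
      rw [Nat.doubleFactorial_two_mul] at h2
      rw [← h2, h1, mul_comm]
    have := congrArg (Nat.cast : ℕ → ℚ) hn
    push_cast at this
    rw [eq_div_iff (by positivity)]
    linarith [this]
  rw [hfac]
  unfold tq
  rw [Nat.doubleFactorial_two_mul]
  have h1 : (m.factorial : ℚ) ≠ 0 := by exact_mod_cast (Nat.factorial_pos m).ne'
  have h2 : ((m - l - j).factorial : ℚ) ≠ 0 := by exact_mod_cast (Nat.factorial_pos _).ne'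
  have h3 : ((l - j).factorial : ℚ) ≠ 0 := by exact_mod_cast (Nat.factorial_pos _).ne'
  have h4 : (j.factorial : ℚ) ≠ 0 := by exact_mod_cast (Nat.factorial_pos _).ne'
  have h5 : (l.factorial : ℚ) ≠ 0 := by exact_mod_cast (Nat.factorial_pos _).ne'
  have h6 : ((m - l).factorial : ℚ) ≠ 0 := by exact_mod_cast (Nat.factorial_pos _).ne'
  have h7 := dfq_ne (2 * j + 1)
  have h8 : (2 * (j : ℚ) + 1) ≠ 0 := by positivity
  have h4j : (4 : ℚ) ^ j = 2 ^ j * 2 ^ j := by rw [← mul_pow]; norm_num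
  rw [h4j]
  push_cast
  field_simp

theorem doubleFactorial_trinomial_sum_identity (m l : ℕ) (hlm : l ≤ m) :
    ((2 * m - 2 * l + 1)‼ : ℚ) *
      ∑ j ∈ Finset.range (min l (m - l) + 1),
        ((4 : ℚ) ^ j *
          ((m.factorial : ℚ) /
            (((m - j - l).factorial : ℚ) * ((2 * j).factorial : ℚ) * ((l - j).factorial : ℚ)))
          / (2 * (j : ℚ) + 1))
      = (((2 * m + 1)‼ : ℚ) / ((2 * l + 1)‼ : ℚ)) * (m.choose l : ℚ) := by
  have hrw : ∀ j ∈ Finset.range (min l (m - l) + 1),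
      ((4 : ℚ) ^ j *
          ((m.factorial : ℚ) /
            (((m - j - l).factorial : ℚ) * ((2 * j).factorial : ℚ) * ((l - j).factorial : ℚ)))
          / (2 * (j : ℚ) + 1))
      = (m.choose l : ℚ) * (tq j * (l.choose j : ℚ) * ((m - l).choose j : ℚ)) := by
    intro j hj
    rw [Finset.mem_range] at hj
    exact term_eq m l j hlm (by omega) (by omega)
  rw [Finset.sum_congr rfl hrw, ← Finset.mul_sum]
  have hext : ∑ j ∈ Finset.range (min l (m - l) + 1),
        tq j * (l.choose j : ℚ) * ((m - l).choose j : ℚ)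
      = ∑ j ∈ Finset.range (l + 1), tq j * (l.choose j : ℚ) * ((m - l).choose j : ℚ) := by
    apply Finset.sum_subset
    · apply Finset.range_subset_range.mpr; omega
    · intro j hj hnj
      rw [Finset.mem_range] at hj
      rw [Finset.mem_range, not_lt] at hnj
      have : m - l < j := by omega
      rw [Nat.choose_eq_zero_of_lt this]
      simp
  rw [hext, key l (m - l)]
  have h2m : 2 * l + 2 * (m - l) = 2 * m := by omega
  have h2ml : 2 * m - 2 * l = 2 * (m - l) := by omega
  rw [h2ml, h2m]
  have hA := dfq_ne (2 * l + 1)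
  have hB := dfq_ne (2 * (m - l) + 1)
  have hC := dfq_ne (2 * m + 1)
  field_simp
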